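/- A finite word of length n over any alphabet contains at most n distinct nonempty palindromic factors. -/

import Mathlib

private lemma pal_set_finite {α : Type*} (w : List α) :
    {p : List α | p ≠ [] ∧ p.reverse = p ∧ p <:+: w}.Finite := by
  apply Set.Finite.subset (List.finite_toSet w.sublists)
  rintro p ⟨-, -, h⟩
  simpa using h.sublist

private lemma infix_concat {α : Type*} {p v : List α} {a : α}
    (h : p <:+: v ++ [a]) : p <:+: v ∨ p <:+ v ++ [a] := by
  obtain ⟨s, t, hst⟩ := h
  rcases t.eq_nil_or_concat with rfl | ⟨t', a', rfl⟩
  · right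
    exact ⟨s, by simpa using hst⟩
  · left
    have hst' : (s ++ (p ++ t')) ++ [a'] = v ++ [a] := by
      simpa [List.append_assoc] using hst
    obtain ⟨h1, -⟩ := List.append_inj' hst' rfl
    exact ⟨s, t', by simpa [List.append_assoc] using h1⟩

/-- A finite word of length `n` over any alphabet contains at most `n`
distinct nonempty palindromic factors. -/
theorem count_palindromic_factors_le {α : Type*} (w : List α) :
    {p : List α | p ≠ [] ∧ p.reverse = p ∧ p <:+: w}.ncard ≤ w.length := by
  induction w using List.reverseRecOn with
  | nil =>
    have : {p : List α | p ≠ [] ∧ p.reverse = p ∧ p <:+: ([] : List α)} = ∅ := by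
      ext p; simp only [Set.mem_setOf_eq, Set.mem_empty_iff_false, iff_false]
      rintro ⟨hne, -, hinf⟩
      exact hne (List.infix_nil.mp hinf)
    rw [this]
    simp
  | append_singleton v a ih =>
    -- the set of nonempty palindromic suffixes of v ++ [a]
    set SP : Set (List α) := {p | p ≠ [] ∧ p.reverse = p ∧ p <:+ v ++ [a]} with hSP
    have hSPfin : SP.Finite := by
      apply Set.Finite.subset (pal_set_finite (v ++ [a]))
      rintro p ⟨h1, h2, h3⟩
      exact ⟨h1, h2, h3.isInfix⟩
    have hmem : [a] ∈ SP := ⟨by simp, by simp, List.suffix_append v [a]⟩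
    obtain ⟨P, hP, hPmax⟩ := hSPfin.exists_maximalFor List.length SP ⟨[a], hmem⟩
    -- the key inclusion
    have hsub : {p : List α | p ≠ [] ∧ p.reverse = p ∧ p <:+: v ++ [a]} ⊆
        insert P {p : List α | p ≠ [] ∧ p.reverse = p ∧ p <:+: v} := by
      rintro p ⟨hne, hpal, hinf⟩
      rcases infix_concat hinf with h | hsuf
      · exact Set.mem_insert_of_mem _ ⟨hne, hpal, h⟩
      · have hpSP : p ∈ SP := ⟨hne, hpal, hsuf⟩
        by_cases hpP : p = P
        · exact hpP ▸ Set.mem_insert _ _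
        · -- p is strictly shorter than P
          have hlt : p.length < P.length := by
            by_contra hle
            push_neg at hle
            have heq := le_antisymm hle (hPmax hpSP hle)
            rcases List.suffix_or_suffix_of_suffix hsuf hP.2.2 with h | h
            · exact hpP (h.eq_of_length heq.symm)
            · exact hpP (h.eq_of_length heq).symm
          -- p is a suffix of P
          have hps : p <:+ P := by
            rcases List.suffix_or_suffix_of_suffix hsuf hP.2.2 with h | h
            · exact h
            · exact absurd h.length_le (by omega)
          -- hence, P being a palindrome, p is a prefix of P
          have hpp : p <+: P := by
            have := hps.reverse
            rwa [hpal, hP.2.1] at this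
          obtain ⟨r, hr⟩ := hpp
          have hrne : r ≠ [] := by
            rintro rfl
            simp only [List.append_nil] at hr
            exact hpP hr
          obtain ⟨s, hs⟩ := hP.2.2
          rw [← hr, ← List.append_assoc] at hs
          rcases r.eq_nil_or_concat with rfl | ⟨r', a', rfl⟩
          · exact absurd rfl hrne
          · have hs' : (s ++ (p ++ r')) ++ [a'] = v ++ [a] := by
              simpa [List.append_assoc] using hs
            obtain ⟨h1, -⟩ := List.append_inj' hs' rfl
            exact Set.mem_insert_of_mem _ ⟨hne, hpal, ⟨s, r', by simpa [List.append_assoc] using h1⟩⟩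
    calc {p : List α | p ≠ [] ∧ p.reverse = p ∧ p <:+: v ++ [a]}.ncard
        ≤ (insert P {p : List α | p ≠ [] ∧ p.reverse = p ∧ p <:+: v}).ncard :=
          Set.ncard_le_ncard hsub ((pal_set_finite v).insert P)
      _ ≤ {p : List α | p ≠ [] ∧ p.reverse = p ∧ p <:+: v}.ncard + 1 :=
          Set.ncard_insert_le _ _
      _ ≤ v.length + 1 := by omega
      _ = (v ++ [a]).length := by simp
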